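/- Let a ≥ 2, d ≥ 2, k, m be positive integers. If a^{kd} - 1 divides (a^{md} - 1)(a^k - 1), then k divides m. -/
import Mathlib

lemma dvd_pow_sub_one_gcd (a n : ℕ) (ha : 1 ≤ a) :
    ∀ x y : ℕ, n ∣ a ^ x - 1 → n ∣ a ^ y - 1 → n ∣ a ^ Nat.gcd x y - 1 := by
  intro x y
  induction x, y using Nat.gcd.induction with
  | H0 y => intro _ h2; simpa using h2
  | H1 x y hx ih =>
    intro h1 h2
    rw [Nat.gcd_rec]
    refine ih ?_ h1
    -- show n ∣ a ^ (y % x) - 1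
    have hX1 : (1:ℕ) ≤ a ^ (y / x * x) := Nat.one_le_pow _ _ ha
    have hB1 : (1:ℕ) ≤ a ^ (y % x) := Nat.one_le_pow _ _ ha
    have e : a ^ (y / x * x) * a ^ (y % x) = a ^ y := by
      rw [← pow_add, Nat.div_add_mod' y x]
    have hdX : n ∣ a ^ (y / x * x) - 1 := by
      refine h1.trans ?_
      have := Nat.sub_dvd_pow_sub_pow (a ^ x) 1 (y / x)
      simpa [← pow_mul, Nat.mul_comm] using this
    have hXa : a ^ (y / x * x) ≤ a ^ y := Nat.pow_le_pow_right (by omega) (Nat.div_mul_le_self y x)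
    have key : a ^ (y / x * x) * (a ^ (y % x) - 1) + (a ^ (y / x * x) - 1) = a ^ y - 1 := by
      rw [Nat.mul_sub, mul_one, e]
      omega
    have hmul : n ∣ a ^ (y / x * x) * (a ^ (y % x) - 1) := by
      have hsum : n ∣ a ^ (y / x * x) * (a ^ (y % x) - 1) + (a ^ (y / x * x) - 1) := by
        rw [key]; exact h2
      simpa using Nat.dvd_sub hsum hdX
    have hcop : Nat.Coprime n (a ^ (y / x * x)) := by
      have h1' : n.gcd (a ^ (y / x * x)) ∣ 1 := by
        have := Nat.dvd_sub (Nat.gcd_dvd_right n (a ^ (y / x * x)))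
          ((Nat.gcd_dvd_left n (a ^ (y / x * x))).trans hdX)
        simpa [Nat.sub_sub_self hX1] using this
      exact Nat.eq_one_of_dvd_one h1'
    exact hcop.dvd_of_dvd_mul_left hmul

theorem stmt_13 (a d k m : ℕ) (ha : 2 ≤ a) (hd : 2 ≤ d) (hk : 0 < k) (hm : 0 < m)
    (hdvd : a ^ (k * d) - 1 ∣ (a ^ (m * d) - 1) * (a ^ k - 1)) :
    k ∣ m := by
  have ha1 : (1:ℕ) < a := ha
  have hak : 2 ≤ a ^ k := le_trans ha (Nat.le_self_pow hk.ne' a)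
  set S : ℕ := ∑ i ∈ Finset.range d, (a ^ k) ^ i with hSdef
  have hgs := geom_sum_mul_add (a ^ k - 1) d
  rw [Nat.sub_add_cancel (by omega : 1 ≤ a ^ k)] at hgs
  -- hgs : S * (a ^ k - 1) + 1 = (a ^ k) ^ d
  have hkd : (a ^ k) ^ d = a ^ (k * d) := by rw [← pow_mul]
  have hgs' : S * (a ^ k - 1) + 1 = (a ^ k) ^ d := hgs
  have hS : S * (a ^ k - 1) = a ^ (k * d) - 1 := by
    rw [← hkd]; omega
  have hS1 : S ∣ a ^ (m * d) - 1 := by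
    have hpos : 0 < a ^ k - 1 := by omega
    have hh : (a ^ k - 1) * S ∣ (a ^ k - 1) * (a ^ (m * d) - 1) := by
      rw [Nat.mul_comm (a ^ k - 1) S, hS, Nat.mul_comm (a ^ k - 1)]
      exact hdvd
    exact (Nat.mul_dvd_mul_iff_left hpos).mp hh
  have hS2 : S ∣ a ^ (k * d) - 1 := ⟨a ^ k - 1, hS.symm⟩
  set g : ℕ := Nat.gcd k m with hgdef
  have hgpos : 0 < g := Nat.pos_of_ne_zero (fun h => by
    rw [hgdef, Nat.gcd_eq_zero_iff] at h; omega)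
  have hSg : S ∣ a ^ (g * d) - 1 := by
    have := dvd_pow_sub_one_gcd a S (by omega) (k * d) (m * d) hS2 hS1
    rwa [Nat.gcd_mul_right] at this
  -- size argument
  have hlow : (a ^ k) ^ (d - 1) + 1 ≤ S := by
    have hsub : ({d - 1, 0} : Finset ℕ) ⊆ Finset.range d := by
      intro i hi
      simp only [Finset.mem_insert, Finset.mem_singleton] at hi
      rcases hi with h | h <;> simp [h] <;> omega
    have := Finset.sum_le_sum_of_subset_of_nonneg hsub
      (fun i _ _ => Nat.zero_le ((a ^ k) ^ i))
    rwa [Finset.sum_pair (by omega : d - 1 ≠ 0), pow_zero] at this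
  have hgd2 : 2 ≤ a ^ (g * d) :=
    le_trans ha (Nat.le_self_pow (Nat.mul_ne_zero (by omega) (by omega)) a)
  have hle : S ≤ a ^ (g * d) - 1 := Nat.le_of_dvd (by omega) hSg
  have hexp : k * (d - 1) < g * d := by
    have h1 : a ^ (k * (d - 1)) < a ^ (g * d) := by
      rw [pow_mul]
      omega
    exact (Nat.pow_lt_pow_iff_right ha1).mp h1
  have hgk : g ∣ k := Nat.gcd_dvd_left k m
  have hg_eq : g = k := by
    by_contra hne
    obtain ⟨t, ht⟩ := hgk
    have ht2 : 2 ≤ t := by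
      rcases Nat.lt_or_ge t 2 with h | h
      · interval_cases t <;> omega
      · exact h
    have h3 : g * (t * (d - 1)) < g * d := by
      rw [← mul_assoc, ← ht]; exact hexp
    have h4 : t * (d - 1) < d := lt_of_mul_lt_mul_left h3 (Nat.zero_le g)
    have h5 : 2 * (d - 1) ≤ t * (d - 1) := Nat.mul_le_mul_right _ ht2
    omega
  rw [← hg_eq]
  exact Nat.gcd_dvd_right k m
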